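/- Let F be a semi-real hyperfield. Then the Marshall quotient F/ₘ(1+ΣF²) is a real reduced multiring, and the canonical surjective morphism F/ₘ(1+ΣF²) → F/ₘ(ΣḞ²) is an isomorphism of multirings, where Ḟ = F∖{0} and ΣḞ² is the set of elements lying in some finite sum of squares of nonzero elements. -/
import Mathlib


universe u v

/-- A multiring: a commutative monoid with a multivalued addition. -/
class Multiring (A : Type u) extends CommMonoid A, Zero A, Neg A where
  /-- the multivalued sum: `madd b c` is the set `b + c` -/
  madd : A → A → Set A
  madd_nonempty : ∀ a b : A, (madd a b).Nonempty
  madd_rev_left : ∀ a b c : A, a ∈ madd b c → c ∈ madd (-b) a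
  madd_rev_right : ∀ a b c : A, a ∈ madd b c → b ∈ madd a (-c)
  mem_madd_zero : ∀ a b : A, a ∈ madd b 0 ↔ a = b
  madd_assoc : ∀ a b c g x : A, g ∈ madd a b → x ∈ madd g c →
    ∃ h ∈ madd b c, x ∈ madd a h
  madd_comm : ∀ a b : A, madd a b = madd b a
  mul_zero' : ∀ a : A, a * 0 = 0
  madd_mul : ∀ a b c d : A, a ∈ madd b c → a * d ∈ madd (b * d) (c * d)

namespace Multiring

variable {A : Type u} [Multiring A]

/-- the iterated multivalued sum `x₁ + ⋯ + xₙ = {x₁} + (x₂ + ⋯ + xₙ)` of a list -/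
def listSum : List A → Set A
  | [] => {(0 : A)}
  | a :: l => {x : A | ∃ y ∈ listSum l, x ∈ madd a y}

/-- an ideal of a multiring: a nonempty subset with `I + I ⊆ I` and `A·I ⊆ I` -/
def IsIdeal (I : Set A) : Prop :=
  I.Nonempty ∧ (∀ a ∈ I, ∀ b ∈ I, madd a b ⊆ I) ∧ ∀ a : A, ∀ b ∈ I, a * b ∈ I

/-- a prime ideal: a proper ideal such that `a*b ∈ p → a ∈ p ∨ b ∈ p` -/
def IsPrimeIdeal (I : Set A) : Prop :=
  IsIdeal I ∧ (1 : A) ∉ I ∧ ∀ a b : A, a * b ∈ I → a ∈ I ∨ b ∈ I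

/-- a maximal ideal: a proper ideal maximal among proper ideals -/
def IsMaximalIdeal (I : Set A) : Prop :=
  IsIdeal I ∧ (1 : A) ∉ I ∧ ∀ J : Set A, IsIdeal J → (1 : A) ∉ J → I ⊆ J → J = I

/-- a multiplicative subset -/
def IsMultiplicative (S : Set A) : Prop :=
  (1 : A) ∈ S ∧ ∀ s ∈ S, ∀ t ∈ S, s * t ∈ S

/-- a hyperring: a multiring with the strong distributivity property -/
def IsHyperring (A : Type u) [Multiring A] : Prop :=
  ∀ x b c d : A, x ∈ madd (b * d) (c * d) → ∃ a ∈ madd b c, x = a * d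

/-- a von Neumann (regular) hyperring -/
def IsVonNeumann (A : Type u) [Multiring A] : Prop :=
  IsHyperring A ∧ ∀ a : A, ∃ b : A, a = a * a * b

/-- the equivalence modulo an ideal `I`: `a ∼_I b` iff `(a + (-b)) ∩ I ≠ ∅`;
this is equality of classes in the quotient multiring `A/I`. -/
def simI (I : Set A) (a b : A) : Prop := ∃ x ∈ madd a (-b), x ∈ I

/-- membership of classes in the multivalued sum of the quotient `A/I`:
`[a] ∈ [b] + [c]` iff `a ∈ b + c + i` for some `i ∈ I`. -/
def qmemI (I : Set A) (a b c : A) : Prop := ∃ i ∈ I, ∃ w ∈ madd c i, a ∈ madd b w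

/-- representatives `x` with `[x] ∈ [c₁] + ⋯ + [cₙ]` in the quotient `A/I` -/
def qlistSumI (I : Set A) : List A → Set A
  | [] => {x : A | simI I x 0}
  | c :: l => {x : A | ∃ y ∈ qlistSumI I l, qmemI I x c y}

/-- the quotient multiring `A/I` is a multifield: `1 ≠ 0` and every nonzero
element is weak-invertible -/
def QuotIsMultifield (I : Set A) : Prop :=
  ¬ simI I 1 0 ∧
    ∀ a : A, ¬ simI I a 0 →
      ∃ l : List A, l ≠ [] ∧ (1 : A) ∈ qlistSumI I (l.map fun b => a * b)

/-- the quotient multiring `A/I` is a hyperfield: `1 ≠ 0` and every nonzero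
element is invertible -/
def QuotIsHyperfield (I : Set A) : Prop :=
  ¬ simI I 1 0 ∧ ∀ a : A, ¬ simI I a 0 → ∃ b : A, simI I (a * b) 1

/-- the Marshall equivalence associated to a multiplicative set `S`:
`a ∼_S b` iff `as = bt` for some `s,t ∈ S`; this is equality of classes in the
Marshall quotient `A/ₘS`. -/
def simM (S : Set A) (a b : A) : Prop := ∃ s ∈ S, ∃ t ∈ S, a * s = b * t

/-- `S̄ = {x : xs ∈ S for some s ∈ S}` -/
def mbar (S : Set A) : Set A := {x : A | ∃ s ∈ S, x * s ∈ S}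

/-- membership of classes in the multivalued sum of the Marshall quotient `A/ₘS`:
`[a] ∈ [b] + [c]` iff `as ∈ bt + cu` for some `s,t,u ∈ S`. -/
def qmemM (S : Set A) (a b c : A) : Prop :=
  ∃ s ∈ S, ∃ t ∈ S, ∃ u ∈ S, a * s ∈ madd (b * t) (c * u)

/-- representatives `x` with `[x] ∈ [c₁] + ⋯ + [cₙ]` in the Marshall quotient `A/ₘS` -/
def qlistSumM (S : Set A) : List A → Set A
  | [] => {x : A | simM S x 0}
  | c :: l => {x : A | ∃ y ∈ qlistSumM S l, qmemM S x c y}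

/-- the multivalued sum of the hyperfield `3 = {-1, 0, 1}` -/
def signAdd : SignType → SignType → Set SignType
  | SignType.zero, x => {x}
  | x, SignType.zero => {x}
  | SignType.pos, SignType.pos => {SignType.pos}
  | SignType.neg, SignType.neg => {SignType.neg}
  | _, _ => Set.univ

/-- a multiring morphism `A → 3`, i.e. an order of `A` -/
def IsSignMorphism (σ : A → SignType) : Prop :=
  (∀ a b c : A, a ∈ madd b c → σ a ∈ signAdd (σ b) (σ c)) ∧
  (∀ a b : A, σ (a * b) = σ a * σ b) ∧
  (∀ a : A, σ (-a) = -(σ a)) ∧ σ 0 = 0 ∧ σ 1 = 1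

/-- a prime cone of a multiring -/
def IsPrimeCone (P : Set A) : Prop :=
  (∀ a : A, a * a ∈ P) ∧ (∀ a ∈ P, ∀ b ∈ P, madd a b ⊆ P) ∧
  (∀ a ∈ P, ∀ b ∈ P, a * b ∈ P) ∧ (∀ a : A, a ∈ P ∨ -a ∈ P) ∧
  IsPrimeIdeal {x : A | x ∈ P ∧ -x ∈ P}

open Classical in
/-- the map `σ_P : A → 3` associated to a prime cone `P` -/
noncomputable def sigmaOf (P : Set A) (a : A) : SignType :=
  if a ∈ P ∧ -a ∈ P then 0 else if a ∈ P then 1 else -1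

/-- `ΣA²`: the set of elements lying in some finite sum of squares -/
def SumsOfSquares (A : Type u) [Multiring A] : Set A :=
  {x : A | ∃ l : List A, l ≠ [] ∧ x ∈ listSum (l.map fun a => a * a)}

/-- a multiring is semi-real when `-1 ∉ ΣA²` -/
def IsSemiReal (A : Type u) [Multiring A] : Prop := (-(1 : A)) ∉ SumsOfSquares A

/-- a real reduced multiring -/
def IsRealReduced (A : Type u) [Multiring A] : Prop :=
  IsSemiReal A ∧ (∀ a : A, a * a * a = a) ∧
  (∀ a b : A, madd a (a * b * b) = {a}) ∧
  (∀ a b : A, ∃ c : A, madd (a * a) (b * b) = {c})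

/-- a hyperfield: a hyperring with `1 ≠ 0` and all nonzero elements invertible -/
def IsHyperfield (A : Type u) [Multiring A] : Prop :=
  IsHyperring A ∧ (1 : A) ≠ 0 ∧ ∀ a : A, a ≠ 0 → ∃ b : A, a * b = 1

/-- a morphism of multirings -/
def IsMorphism {B : Type v} [Multiring B] (f : A → B) : Prop :=
  (∀ a b c : A, a ∈ madd b c → f a ∈ madd (f b) (f c)) ∧
  (∀ a b : A, f (a * b) = f a * f b) ∧
  (∀ a : A, f (-a) = -(f a)) ∧ f 0 = 0 ∧ f 1 = 1

/-- the radical `√α = {x : xⁿ ∈ α for some n ≥ 1}` of an ideal -/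
def radical (α : Set A) : Set A := {x : A | ∃ n : ℕ, 1 ≤ n ∧ x ^ n ∈ α}

/-- the ideal `(x) = ∪ {t₁x + ⋯ + tₙx}` generated by `x` -/
def genIdeal (x : A) : Set A :=
  {y : A | ∃ l : List A, l ≠ [] ∧ y ∈ listSum (l.map fun t => t * x)}

/-- `S_a = {x : aⁿ ∈ (x) for some n ≥ 0}` -/
def Sgen (a : A) : Set A := {x : A | ∃ n : ℕ, a ^ n ∈ genIdeal x}

/-- `a` is weak-invertible when `1 ∈ ab₁ + ⋯ + abₙ` for some `b₁,…,bₙ` -/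
def WeakInvertible (a : A) : Prop :=
  ∃ l : List A, l ≠ [] ∧ (1 : A) ∈ listSum (l.map fun b => a * b)

/-- the prime spectrum of a multiring -/
abbrev Spec (A : Type u) [Multiring A] : Type u := {p : Set A // IsPrimeIdeal p}

/-- the spectral topology on `spec A`, generated by the sets `D(a) = {p : a ∉ p}` -/
instance : TopologicalSpace (Spec A) :=
  TopologicalSpace.generateFrom {U : Set (Spec A) | ∃ a : A, U = {p : Spec A | a ∉ p.1}}

/-- the Marshall quotient `A/ₘS` is a real reduced multiring (expressed on
representatives) -/
def QuotIsRealReduced (S : Set A) : Prop :=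
  (∀ l : List A, l ≠ [] → (-(1 : A)) ∉ qlistSumM S (l.map fun a => a * a)) ∧
  (∀ a : A, simM S (a * a * a) a) ∧
  (∀ a b x : A, qmemM S x a (a * b * b) ↔ simM S x a) ∧
  (∀ a b : A, ∃ c : A, ∀ x : A, qmemM S x (a * a) (b * b) ↔ simM S x c)

/-- the Marshall quotient `A/ₘS` is a geometric von Neumann hyperring
(expressed on representatives): it is a hyperring, von Neumann regular, and
`e + eᶜ = {1}` for every idempotent `e` -/
def QuotGeometricVN (S : Set A) : Prop :=
  (∀ x b c d : A, qmemM S x (b * d) (c * d) → ∃ a : A, qmemM S a b c ∧ simM S x (a * d)) ∧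
  (∀ a : A, ∃ b : A, simM S a (a * a * b)) ∧
  (∀ e x : A, simM S (e * e) e → qmemM S x 1 (-e) → simM S (e * x) 0 →
    ∀ y : A, qmemM S y e x ↔ simM S y 1)

/-- a von Neumann subgroup: a multiplicative set such that for every idempotent
`a` (with complement `aᶜ`) and every `x ∈ D_S(a, aᶜ)` there is `s ∈ S` with `xs ∈ S` -/
def IsVNSubgroup (S : Set A) : Prop :=
  IsMultiplicative S ∧
    ∀ a x ac : A, a * a = a → ac ∈ madd 1 (-a) → a * ac = 0 →
      (∃ u ∈ S, ∃ v ∈ S, ∃ w ∈ S, x * u ∈ madd (a * v) (ac * w)) →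
      ∃ s ∈ S, x * s ∈ S

/-- a preorder of a multiring -/
def IsPreorderSet (T : Set A) : Prop :=
  (∀ a : A, a * a ∈ T) ∧ (∀ a ∈ T, ∀ b ∈ T, a * b ∈ T) ∧ (∀ a ∈ T, ∀ b ∈ T, madd a b ⊆ T)

/-- `1 + T = ∪ {1 + t : t ∈ T}` -/
def oneAdd (T : Set A) : Set A := {x : A | ∃ t ∈ T, x ∈ madd 1 t}

/-- `ΣḞ²`: elements lying in some finite sum of squares of nonzero elements -/
def sumSqNonzero (A : Type u) [Multiring A] : Set A :=
  {x : A | ∃ l : List A, l ≠ [] ∧ (∀ a ∈ l, a ≠ 0) ∧ x ∈ listSum (l.map fun a => a * a)}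

end Multiring

namespace Multiring

variable {A : Type u} [Multiring A]

/-! ### Basic arithmetic facts -/

lemma zero_mul'' (a : A) : (0 : A) * a = 0 := by rw [mul_comm]; exact mul_zero' a

lemma self_mem_madd_zero (a : A) : a ∈ madd a 0 := (mem_madd_zero a a).2 rfl

lemma zero_mem_madd_neg (a : A) : (0 : A) ∈ madd (-a) a :=
  madd_rev_left a a 0 (self_mem_madd_zero a)

lemma neg_neg' (a : A) : -(-a) = a :=
  ((mem_madd_zero a (-(-a))).1 (madd_rev_left 0 (-a) a (zero_mem_madd_neg a))).symm

lemma neg_zero' : (-(0 : A)) = 0 :=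
  ((mem_madd_zero (0:A) (-(0:A))).1 (zero_mem_madd_neg (0:A))).symm

lemma neg_one_mul' (a : A) : (-1 : A) * a = -a := by
  have h1 : (0 : A) * a ∈ madd ((-1) * a) (1 * a) := madd_mul 0 (-1) 1 a (zero_mem_madd_neg 1)
  rw [zero_mul'', one_mul] at h1
  have h2 : a = -((-1) * a) :=
    (mem_madd_zero a (-((-1) * a))).1 (madd_rev_left 0 ((-1) * a) a h1)
  calc (-1 : A) * a = -(-((-1) * a)) := (neg_neg' _).symm
  _ = -a := by rw [← h2]

lemma neg_mul'' (a b : A) : (-a) * b = -(a * b) := by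
  rw [← neg_one_mul' a, mul_assoc, neg_one_mul']

lemma eq_zero_of_mul_hf (hF : IsHyperfield A) {a b : A} (h : a * b = 0) (hb : b ≠ 0) :
    a = 0 := by
  obtain ⟨c, hc⟩ := hF.2.2 b hb
  calc a = a * (b * c) := by rw [hc, mul_one]
  _ = (a * b) * c := by rw [mul_assoc]
  _ = 0 := by rw [h, zero_mul'']

/-! ### Associativity and list sums -/

lemma madd_assoc_left {a b c g x : A} (hg : g ∈ madd b c) (hx : x ∈ madd a g) :
    ∃ w ∈ madd a b, x ∈ madd w c := by
  rw [madd_comm] at hx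
  obtain ⟨h, hh, hx2⟩ := madd_assoc b c a g x hg hx
  rw [madd_comm] at hx2
  obtain ⟨k, hk, hxk⟩ := madd_assoc c a b h x hh hx2
  rw [madd_comm] at hxk
  exact ⟨k, hk, hxk⟩

lemma mem_listSum_nil {x : A} : x ∈ listSum ([] : List A) ↔ x = 0 := Iff.rfl

lemma mem_listSum_cons {x a : A} {l : List A} :
    x ∈ listSum (a :: l) ↔ ∃ y ∈ listSum l, x ∈ madd a y := Iff.rfl

lemma mem_listSum_append {x : A} {L M : List A} :
    x ∈ listSum (L ++ M) ↔ ∃ u ∈ listSum L, ∃ v ∈ listSum M, x ∈ madd u v := by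
  induction L generalizing x with
  | nil =>
    simp only [List.nil_append]
    constructor
    · intro hx
      exact ⟨0, rfl, x, hx, by rw [madd_comm]; exact self_mem_madd_zero x⟩
    · rintro ⟨u, hu, v, hv, hx⟩
      have hu0 : u = 0 := hu
      subst hu0
      rw [madd_comm] at hx
      rwa [(mem_madd_zero x v).1 hx]
  | cons a L ih =>
    constructor
    · rintro ⟨y, hy, hx⟩
      obtain ⟨u, hu, v, hv, hyuv⟩ := ih.1 hy
      obtain ⟨w, hw, hxw⟩ := madd_assoc_left hyuv hx
      exact ⟨w, ⟨u, hu, hw⟩, v, hv, hxw⟩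
    · rintro ⟨u, ⟨y, hy, hu⟩, v, hv, hx⟩
      obtain ⟨h, hh, hxh⟩ := madd_assoc a y v u x hu hx
      exact ⟨h, ih.2 ⟨y, hy, v, hv, hh⟩, hxh⟩

lemma listSum_scale {x d : A} {L : List A} (h : x ∈ listSum L) :
    x * d ∈ listSum (L.map (· * d)) := by
  induction L generalizing x with
  | nil =>
    have h0 : x = 0 := h
    subst h0
    rw [zero_mul'']
    exact rfl
  | cons a L ih =>
    obtain ⟨y, hy, hx⟩ := h
    exact ⟨y * d, ih hy, madd_mul x a y d hx⟩

lemma listSum_sq_scale {x d : A} {l : List A}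
    (h : x ∈ listSum (l.map fun a => a * a)) :
    x * (d * d) ∈ listSum ((l.map (· * d)).map fun a => a * a) := by
  have h2 := listSum_scale (d := d * d) h
  rw [List.map_map] at h2 ⊢
  have he : ((fun a => a * a) ∘ fun a : A => a * d) =
      ((· * (d * d)) ∘ fun a : A => a * a) := by
    funext a
    show (a * d) * (a * d) = (a * a) * (d * d)
    ac_rfl
  rw [he]
  exact h2

/-! ### Sums of squares -/

lemma sq_mem_sos (a : A) : a * a ∈ SumsOfSquares A :=
  ⟨[a], by simp, 0, rfl, self_mem_madd_zero _⟩

lemma zero_mem_sos : (0 : A) ∈ SumsOfSquares A :=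
  ⟨[0], by simp, 0, rfl, by show (0:A) ∈ madd (0 * 0) 0; rw [mul_zero']; exact self_mem_madd_zero 0⟩

lemma one_mem_sos : (1 : A) ∈ SumsOfSquares A := by
  have := sq_mem_sos (1 : A); rwa [one_mul] at this

lemma sos_madd_closed {a b x : A} (ha : a ∈ SumsOfSquares A) (hb : b ∈ SumsOfSquares A)
    (hx : x ∈ madd a b) : x ∈ SumsOfSquares A := by
  obtain ⟨l, hl, hal⟩ := ha
  obtain ⟨m, hm, hbm⟩ := hb
  refine ⟨l ++ m, by simp [hl], ?_⟩
  rw [List.map_append]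
  exact mem_listSum_append.2 ⟨a, hal, b, hbm, hx⟩

lemma sos_mul_sq {x : A} (d : A) (hx : x ∈ SumsOfSquares A) :
    x * (d * d) ∈ SumsOfSquares A := by
  obtain ⟨l, hl, h⟩ := hx
  exact ⟨l.map (· * d), by simp [hl], listSum_sq_scale h⟩

lemma sos_mul_listSum {a : A} (ha : a ∈ SumsOfSquares A) :
    ∀ (m : List A) (b : A), b ∈ listSum (m.map fun t => t * t) →
      a * b ∈ SumsOfSquares A := by
  intro m
  induction m with
  | nil =>
    intro b hb
    have hb0 : b = 0 := hb
    rw [hb0, mul_zero']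
    exact zero_mem_sos
  | cons c m ih =>
    intro b hb
    obtain ⟨y, hy, hbc⟩ := hb
    have h1 : b * a ∈ madd ((c * c) * a) (y * a) := madd_mul b (c * c) y a hbc
    have h2 : (c * c) * a ∈ SumsOfSquares A := by
      have := sos_mul_sq c ha; rwa [mul_comm] at this
    have h3 : y * a ∈ SumsOfSquares A := by
      have := ih y hy; rwa [mul_comm] at this
    rw [mul_comm]
    exact sos_madd_closed h2 h3 h1

lemma sos_mul_closed {a b : A} (ha : a ∈ SumsOfSquares A) (hb : b ∈ SumsOfSquares A) :
    a * b ∈ SumsOfSquares A := by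
  obtain ⟨m, _, h⟩ := hb
  exact sos_mul_listSum ha m b h

/-! ### Sums of squares of nonzero elements -/

lemma ssn_subset_sos : sumSqNonzero A ⊆ SumsOfSquares A :=
  fun _ ⟨l, hl, _, h⟩ => ⟨l, hl, h⟩

lemma sq_mem_ssn {a : A} (ha : a ≠ 0) : a * a ∈ sumSqNonzero A :=
  ⟨[a], by simp, by simp [ha], 0, rfl, self_mem_madd_zero _⟩

lemma one_mem_ssn (hF : IsHyperfield A) : (1 : A) ∈ sumSqNonzero A := by
  have := sq_mem_ssn (A := A) hF.2.1; rwa [one_mul] at this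

lemma ssn_madd_closed {a b x : A} (ha : a ∈ sumSqNonzero A) (hb : b ∈ sumSqNonzero A)
    (hx : x ∈ madd a b) : x ∈ sumSqNonzero A := by
  obtain ⟨l, hl, hlz, hal⟩ := ha
  obtain ⟨m, hm, hmz, hbm⟩ := hb
  refine ⟨l ++ m, by simp [hl], ?_, ?_⟩
  · intro t ht
    rcases List.mem_append.1 ht with h | h
    · exact hlz t h
    · exact hmz t h
  · rw [List.map_append]
    exact mem_listSum_append.2 ⟨a, hal, b, hbm, hx⟩

lemma ssn_mul_sq (hF : IsHyperfield A) {x d : A} (hx : x ∈ sumSqNonzero A) (hd : d ≠ 0) :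
    x * (d * d) ∈ sumSqNonzero A := by
  obtain ⟨l, hl, hlz, h⟩ := hx
  refine ⟨l.map (· * d), by simp [hl], ?_, listSum_sq_scale h⟩
  intro t ht
  obtain ⟨e, he, rfl⟩ := List.mem_map.1 ht
  intro h0
  exact hlz e he (eq_zero_of_mul_hf hF h0 hd)

lemma zero_not_mem_ssn (hF : IsHyperfield A) (hsr : IsSemiReal A) :
    (0 : A) ∉ sumSqNonzero A := by
  rintro ⟨l, hl, hlz, h⟩
  match l with
  | c :: m =>
    obtain ⟨y, hy, h0⟩ := h
    have hc : c ≠ 0 := hlz c (by simp)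
    have h1 : c * c ∈ madd 0 (-y) := madd_rev_right 0 (c * c) y h0
    rw [madd_comm] at h1
    have h2 : c * c = -y := (mem_madd_zero _ _).1 h1
    have h3 : y = -(c * c) := by rw [h2, neg_neg']
    match m with
    | [] =>
      have hy0 : y = 0 := hy
      have : c * c = 0 := by rw [h2, hy0, neg_zero']
      exact hc (eq_zero_of_mul_hf hF this hc)
    | e :: m' =>
      have h4 : -(c * c) ∈ SumsOfSquares A := ⟨e :: m', by simp, by rw [← h3]; exact hy⟩
      obtain ⟨c', hc'⟩ := hF.2.2 c hc
      have h5 := sos_mul_sq c' h4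
      have h6 : -(c * c) * (c' * c') = -(1 : A) := by
        rw [neg_mul'']
        have : (c * c) * (c' * c') = (c * c') * (c * c') := by ac_rfl
        rw [this, hc', mul_one]
      rw [h6] at h5
      exact hsr h5

lemma mem_ssn_of_listSum :
    ∀ (l : List A) (x : A), x ≠ 0 → x ∈ listSum (l.map fun a => a * a) →
      x ∈ sumSqNonzero A := by
  intro l
  induction l with
  | nil => intro x hx h; exact absurd h hx
  | cons c m ih =>
    intro x hx h
    obtain ⟨y, hy, hxc⟩ := h
    by_cases hc : c = 0
    · subst hc
      have hxc2 : x ∈ madd ((0:A) * 0) y := hxc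
      rw [mul_zero'] at hxc2
      rw [madd_comm] at hxc2
      replace hxc := hxc2
      rw [(mem_madd_zero x y).1 hxc]  at hx ⊢
      exact ih y hx hy
    · by_cases hy0 : y = 0
      · subst hy0
        rw [(mem_madd_zero x (c * c)).1 hxc]
        exact sq_mem_ssn hc
      · exact ssn_madd_closed (sq_mem_ssn hc) (ih y hy0 hy) hxc

lemma sos_ne_zero_mem_ssn {x : A} (hx : x ∈ SumsOfSquares A) (h0 : x ≠ 0) :
    x ∈ sumSqNonzero A := by
  obtain ⟨l, _, h⟩ := hx
  exact mem_ssn_of_listSum l x h0 h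

lemma ssn_ne_zero (hF : IsHyperfield A) (hsr : IsSemiReal A) {x : A}
    (hx : x ∈ sumSqNonzero A) : x ≠ 0 := fun h => zero_not_mem_ssn hF hsr (h ▸ hx)

lemma ssn_mul_listSum (hF : IsHyperfield A) {a : A} (ha : a ∈ sumSqNonzero A) :
    ∀ (m : List A), (∀ c ∈ m, c ≠ 0) → ∀ b, b ∈ listSum (m.map fun t => t * t) →
      b = 0 ∨ a * b ∈ sumSqNonzero A := by
  intro m
  induction m with
  | nil => intro _ b hb; exact Or.inl hb
  | cons c m ih =>
    intro hnz b hb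
    obtain ⟨y, hy, hbc⟩ := hb
    have hc : c ≠ 0 := hnz c (by simp)
    have hcc : a * (c * c) ∈ sumSqNonzero A := ssn_mul_sq hF ha hc
    rcases ih (fun t ht => hnz t (by simp [ht])) y hy with hy0 | hay
    · subst hy0
      right
      rw [(mem_madd_zero b (c * c)).1 hbc, mul_comm]
      have := hcc; rwa [mul_comm] at this
    · right
      have h1 : b * a ∈ madd ((c * c) * a) (y * a) := madd_mul b (c * c) y a hbc
      rw [mul_comm]
      refine ssn_madd_closed ?_ ?_ h1
      · rwa [mul_comm] at hcc
      · rwa [mul_comm] at hay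

lemma ssn_mul_closed (hF : IsHyperfield A) (hsr : IsSemiReal A) {a b : A}
    (ha : a ∈ sumSqNonzero A) (hb : b ∈ sumSqNonzero A) : a * b ∈ sumSqNonzero A := by
  obtain ⟨m, _, hnz, h⟩ := id hb
  rcases ssn_mul_listSum hF ha m hnz b h with h0 | h1
  · exact absurd (h0 ▸ hb) (zero_not_mem_ssn hF hsr)
  · exact h1

lemma ssn_inv (hF : IsHyperfield A) (hsr : IsSemiReal A) {x : A}
    (hx : x ∈ sumSqNonzero A) : ∃ y, x * y = 1 ∧ y ∈ sumSqNonzero A := by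
  obtain ⟨y, hy⟩ := hF.2.2 x (ssn_ne_zero hF hsr hx)
  have hy0 : y ≠ 0 := by
    intro h; rw [h, mul_zero'] at hy; exact hF.2.1 hy.symm
  have h1 : x * (y * y) = y := by
    rw [← mul_assoc, hy, one_mul]
  exact ⟨y, hy, h1 ▸ ssn_mul_sq hF hx hy0⟩

lemma ssn_cancel (hF : IsHyperfield A) (hsr : IsSemiReal A) {x s : A}
    (hxs : x * s ∈ sumSqNonzero A) (hs : s ∈ sumSqNonzero A) : x ∈ sumSqNonzero A := by
  obtain ⟨s', hss', hs'⟩ := ssn_inv hF hsr hs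
  have : (x * s) * s' = x := by rw [mul_assoc, hss', mul_one]
  exact this ▸ ssn_mul_closed hF hsr hxs hs'

lemma eq_zero_of_mul_ssn (hF : IsHyperfield A) (hsr : IsSemiReal A) {x s : A}
    (h : x * s = 0) (hs : s ∈ sumSqNonzero A) : x = 0 :=
  eq_zero_of_mul_hf hF h (ssn_ne_zero hF hsr hs)

/-! ### simM over `ΣḞ²` -/

lemma simM_ssn_refl (a : A) (h1 : (1:A) ∈ sumSqNonzero A) : simM (sumSqNonzero A) a a :=
  ⟨1, h1, 1, h1, rfl⟩

lemma simM_ssn_zero (hF : IsHyperfield A) (hsr : IsSemiReal A) {x : A} :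
    simM (sumSqNonzero A) x 0 ↔ x = 0 := by
  constructor
  · rintro ⟨s, hs, t, _, e⟩
    rw [zero_mul''] at e
    exact eq_zero_of_mul_ssn hF hsr e hs
  · rintro rfl
    exact simM_ssn_refl 0 (one_mem_ssn hF)

lemma simM_of_ssn (hF : IsHyperfield A) (hsr : IsSemiReal A) {x c : A}
    (hx : x ∈ sumSqNonzero A) (hc : c ∈ sumSqNonzero A) : simM (sumSqNonzero A) x c := by
  obtain ⟨x', hxx', hx'⟩ := ssn_inv hF hsr hx
  refine ⟨x' * c, ssn_mul_closed hF hsr hx' hc, 1, one_mem_ssn hF, ?_⟩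
  rw [mul_one, ← mul_assoc, hxx', one_mul]

/-! ### `1 + ΣF²` -/

lemma one_mem_oneAdd : (1 : A) ∈ oneAdd (SumsOfSquares A) :=
  ⟨0, zero_mem_sos, self_mem_madd_zero 1⟩

lemma oneAdd_subset_sos : oneAdd (SumsOfSquares A) ⊆ SumsOfSquares A := by
  rintro s ⟨t, ht, hs⟩
  exact sos_madd_closed one_mem_sos ht hs

lemma oneAdd_ne_zero (hsr : IsSemiReal A) {s : A} (hs : s ∈ oneAdd (SumsOfSquares A)) :
    s ≠ 0 := by
  rintro rfl
  obtain ⟨t, ht, h0⟩ := hs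
  have h1 : t ∈ madd (-1) 0 := madd_rev_left 0 1 t h0
  rw [(mem_madd_zero t (-1)).1 h1] at ht
  exact hsr ht

lemma oneAdd_subset_ssn (hsr : IsSemiReal A) :
    oneAdd (SumsOfSquares A) ⊆ sumSqNonzero A := fun s hs =>
  sos_ne_zero_mem_ssn (oneAdd_subset_sos hs) (oneAdd_ne_zero hsr hs)

lemma oneAdd_mul_closed {s t : A} (hs : s ∈ oneAdd (SumsOfSquares A))
    (ht : t ∈ oneAdd (SumsOfSquares A)) : s * t ∈ oneAdd (SumsOfSquares A) := by
  obtain ⟨σ, hσ, hs1⟩ := hs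
  obtain ⟨τ, hτ, ht1⟩ := ht
  have h1 : s * t ∈ madd (1 * t) (σ * t) := madd_mul s 1 σ t hs1
  rw [one_mul] at h1
  obtain ⟨h, hh, hsth⟩ := madd_assoc 1 τ (σ * t) t (s * t) ht1 h1
  exact ⟨h, sos_madd_closed hτ (sos_mul_closed hσ (oneAdd_subset_sos ⟨τ, hτ, ht1⟩)) hh, hsth⟩

/-- the key lemma: every element of `ΣḞ²` is a quotient of two elements of `1+ΣF²` -/
lemma ssn_quotient (hF : IsHyperfield A) (hsr : IsSemiReal A) {x : A}
    (hx : x ∈ sumSqNonzero A) :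
    ∃ s ∈ oneAdd (SumsOfSquares A), ∃ t ∈ oneAdd (SumsOfSquares A), x * t = s := by
  obtain ⟨y, hxy, hy⟩ := ssn_inv hF hsr hx
  obtain ⟨t, ht⟩ := madd_nonempty (1 : A) y
  have htS : t ∈ oneAdd (SumsOfSquares A) := ⟨y, ssn_subset_sos hy, ht⟩
  have h1 : t * x ∈ madd (1 * x) (y * x) := madd_mul t 1 y x ht
  rw [one_mul, mul_comm y x, hxy] at h1
  rw [madd_comm] at h1
  have hxtS : x * t ∈ oneAdd (SumsOfSquares A) := by
    rw [mul_comm]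
    exact ⟨x, ssn_subset_sos hx, h1⟩
  exact ⟨x * t, hxtS, t, htS, rfl⟩

/-! ### Bridging lemmas -/

lemma simM_bridge (hF : IsHyperfield A) (hsr : IsSemiReal A) (a b : A) :
    simM (oneAdd (SumsOfSquares A)) a b ↔ simM (sumSqNonzero A) a b := by
  constructor
  · rintro ⟨s, hs, t, ht, e⟩
    exact ⟨s, oneAdd_subset_ssn hsr hs, t, oneAdd_subset_ssn hsr ht, e⟩
  · rintro ⟨s, hs, t, ht, e⟩
    obtain ⟨s₁, hs₁, s₂, hs₂, es⟩ := ssn_quotient hF hsr hs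
    obtain ⟨t₁, ht₁, t₂, ht₂, et⟩ := ssn_quotient hF hsr ht
    refine ⟨s₁ * t₂, oneAdd_mul_closed hs₁ ht₂, t₁ * s₂, oneAdd_mul_closed ht₁ hs₂, ?_⟩
    rw [← es, ← et]
    calc a * (s * s₂ * t₂) = (a * s) * (s₂ * t₂) := by ac_rfl
    _ = (b * t) * (s₂ * t₂) := by rw [e]
    _ = b * (t * t₂ * s₂) := by ac_rfl

lemma qmemM_bridge (hF : IsHyperfield A) (hsr : IsSemiReal A) (a b c : A) :
    qmemM (oneAdd (SumsOfSquares A)) a b c ↔ qmemM (sumSqNonzero A) a b c := by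
  constructor
  · rintro ⟨s, hs, t, ht, u, hu, h⟩
    exact ⟨s, oneAdd_subset_ssn hsr hs, t, oneAdd_subset_ssn hsr ht,
      u, oneAdd_subset_ssn hsr hu, h⟩
  · rintro ⟨s, hs, t, ht, u, hu, h⟩
    obtain ⟨s₁, hs₁, s₂, hs₂, es⟩ := ssn_quotient hF hsr hs
    obtain ⟨t₁, ht₁, t₂, ht₂, et⟩ := ssn_quotient hF hsr ht
    obtain ⟨u₁, hu₁, u₂, hu₂, eu⟩ := ssn_quotient hF hsr hu
    have h2 : (a * s) * (s₂ * t₂ * u₂) ∈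
        madd ((b * t) * (s₂ * t₂ * u₂)) ((c * u) * (s₂ * t₂ * u₂)) :=
      madd_mul (a * s) (b * t) (c * u) (s₂ * t₂ * u₂) h
    have e1 : (a * s) * (s₂ * t₂ * u₂) = a * (s₁ * (t₂ * u₂)) := by
      rw [← es]; ac_rfl
    have e2 : (b * t) * (s₂ * t₂ * u₂) = b * (t₁ * (s₂ * u₂)) := by
      rw [← et]; ac_rfl
    have e3 : (c * u) * (s₂ * t₂ * u₂) = c * (u₁ * (s₂ * t₂)) := by
      rw [← eu]; ac_rfl
    rw [e1, e2, e3] at h2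
    exact ⟨s₁ * (t₂ * u₂), oneAdd_mul_closed hs₁ (oneAdd_mul_closed ht₂ hu₂),
      t₁ * (s₂ * u₂), oneAdd_mul_closed ht₁ (oneAdd_mul_closed hs₂ hu₂),
      u₁ * (s₂ * t₂), oneAdd_mul_closed hu₁ (oneAdd_mul_closed hs₂ ht₂), h2⟩

lemma qlistSumM_bridge (hF : IsHyperfield A) (hsr : IsSemiReal A) (l : List A) :
    qlistSumM (oneAdd (SumsOfSquares A)) l = qlistSumM (sumSqNonzero A) l := by
  induction l with
  | nil => ext x; exact simM_bridge hF hsr x 0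
  | cons c l ih =>
    ext x
    constructor
    · rintro ⟨y, hy, hq⟩
      exact ⟨y, ih ▸ hy, (qmemM_bridge hF hsr x c y).1 hq⟩
    · rintro ⟨y, hy, hq⟩
      exact ⟨y, ih ▸ hy, (qmemM_bridge hF hsr x c y).2 hq⟩

/-! ### The four real-reduced conditions over `ΣḞ²` -/

lemma qmemM_ssn_sub (hF : IsHyperfield A) (hsr : IsSemiReal A) {x b c : A}
    (hb : b ∈ sumSqNonzero A ∨ b = 0) (hc : c ∈ sumSqNonzero A ∨ c = 0)
    (h : qmemM (sumSqNonzero A) x b c) : x ∈ sumSqNonzero A ∨ x = 0 := by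
  obtain ⟨s, hs, t, ht, u, hu, hm⟩ := h
  rcases hb with hb | rfl
  · rcases hc with hc | rfl
    · left
      exact ssn_cancel hF hsr
        (ssn_madd_closed (ssn_mul_closed hF hsr hb ht) (ssn_mul_closed hF hsr hc hu) hm) hs
    · rw [zero_mul''] at hm
      have : x * s = b * t := (mem_madd_zero _ _).1 hm
      left
      exact ssn_cancel hF hsr (this ▸ ssn_mul_closed hF hsr hb ht) hs
  · rcases hc with hc | rfl
    · rw [zero_mul'', madd_comm] at hm
      have : x * s = c * u := (mem_madd_zero _ _).1 hm
      left
      exact ssn_cancel hF hsr (this ▸ ssn_mul_closed hF hsr hc hu) hs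
    · rw [zero_mul'', zero_mul''] at hm
      have : x * s = 0 := (mem_madd_zero _ _).1 hm
      right
      exact eq_zero_of_mul_ssn hF hsr this hs

lemma qlistSumM_ssn_sub (hF : IsHyperfield A) (hsr : IsSemiReal A) :
    ∀ (m : List A) (x : A), x ∈ qlistSumM (sumSqNonzero A) (m.map fun a => a * a) →
      x ∈ sumSqNonzero A ∨ x = 0 := by
  intro m
  induction m with
  | nil =>
    intro x hx
    exact Or.inr ((simM_ssn_zero hF hsr).1 hx)
  | cons c m ih =>
    rintro x ⟨y, hy, hq⟩
    have hcc : c * c ∈ sumSqNonzero A ∨ c * c = 0 := by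
      by_cases hc : c = 0
      · right; rw [hc, mul_zero']
      · left; exact sq_mem_ssn hc
    exact qmemM_ssn_sub hF hsr hcc (ih y hy) hq

lemma neg_one_ne_zero_hf (hF : IsHyperfield A) : (-1 : A) ≠ 0 := by
  intro h
  have : (1 : A) = 0 := by rw [← neg_neg' (1 : A), h, neg_zero']
  exact hF.2.1 this

/-- condition (ii) over `ΣḞ²` -/
lemma simM_cube (hF : IsHyperfield A) (hsr : IsSemiReal A) (a : A) :
    simM (sumSqNonzero A) (a * a * a) a := by
  by_cases ha : a = 0
  · subst ha
    have : (0 : A) * 0 * 0 = 0 := by rw [mul_zero']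
    rw [this]
    exact simM_ssn_refl 0 (one_mem_ssn hF)
  · refine ⟨1, one_mem_ssn hF, a * a, sq_mem_ssn ha, ?_⟩
    rw [mul_one]; ac_rfl

/-- condition (iii) over `ΣḞ²` -/
lemma qmemM_absorb (hF : IsHyperfield A) (hsr : IsSemiReal A) (a b x : A) :
    qmemM (sumSqNonzero A) x a (a * b * b) ↔ simM (sumSqNonzero A) x a := by
  by_cases hb : b = 0
  · subst hb
    rw [mul_zero']
    constructor
    · rintro ⟨s, hs, t, ht, u, hu, h⟩
      rw [zero_mul''] at h
      exact ⟨s, hs, t, ht, (mem_madd_zero _ _).1 h⟩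
    · rintro ⟨s, hs, t, ht, e⟩
      refine ⟨s, hs, t, ht, 1, one_mem_ssn hF, ?_⟩
      rw [zero_mul'', e]
      exact self_mem_madd_zero _
  · constructor
    · rintro ⟨s, hs, t, ht, u, hu, h⟩
      have e1 : a * t = t * a := mul_comm a t
      have e2 : (a * b * b) * u = (b * b * u) * a := by ac_rfl
      rw [e1, e2] at h
      obtain ⟨g, hg, hxg⟩ := hF.1 (x * s) t (b * b * u) a h
      have hgS : g ∈ sumSqNonzero A :=
        ssn_madd_closed ht (ssn_mul_closed hF hsr (sq_mem_ssn hb) hu) hg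
      exact ⟨s, hs, g, hgS, by rw [hxg]; exact mul_comm g a⟩
    · rintro ⟨s, hs, t, ht, e⟩
      obtain ⟨w, hw⟩ := madd_nonempty (1 : A) 1
      have hwS : w ∈ sumSqNonzero A :=
        ssn_madd_closed (one_mem_ssn hF) (one_mem_ssn hF) hw
      obtain ⟨c, hc⟩ := hF.2.2 b hb
      have hc0 : c ≠ 0 := by
        intro h0; rw [h0, mul_zero'] at hc; exact hF.2.1 hc.symm
      refine ⟨s * w, ssn_mul_closed hF hsr hs hwS, t, ht,
        t * (c * c), ssn_mul_closed hF hsr ht (sq_mem_ssn hc0), ?_⟩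
      have e4 : (a * b * b) * (t * (c * c)) = (a * t) * ((b * c) * (b * c)) := by ac_rfl
      rw [e4, hc, mul_one, mul_one]
      have e5 : x * (s * w) = w * (x * s) := by ac_rfl
      rw [e5, e]
      have h6 : w * (a * t) ∈ madd (1 * (a * t)) (1 * (a * t)) :=
        madd_mul w 1 1 (a * t) hw
      rwa [one_mul] at h6

/-- condition (iv) over `ΣḞ²` -/
lemma qmemM_sq_single (hF : IsHyperfield A) (hsr : IsSemiReal A) (a b : A) :
    ∃ c : A, ∀ x : A, qmemM (sumSqNonzero A) x (a * a) (b * b) ↔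
      simM (sumSqNonzero A) x c := by
  by_cases ha : a = 0
  · subst ha
    rw [mul_zero']
    by_cases hb : b = 0
    · subst hb
      rw [mul_zero']
      refine ⟨0, fun x => ?_⟩
      rw [simM_ssn_zero hF hsr]
      constructor
      · rintro ⟨s, hs, t, _, u, _, h⟩
        rw [zero_mul'', zero_mul''] at h
        exact eq_zero_of_mul_ssn hF hsr ((mem_madd_zero _ _).1 h) hs
      · rintro rfl
        refine ⟨1, one_mem_ssn hF, 1, one_mem_ssn hF, 1, one_mem_ssn hF, ?_⟩
        rw [zero_mul'']
        exact self_mem_madd_zero _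
    · refine ⟨b * b, fun x => ?_⟩
      constructor
      · rintro ⟨s, hs, t, _, u, hu, h⟩
        rw [zero_mul'', madd_comm] at h
        exact ⟨s, hs, u, hu, (mem_madd_zero _ _).1 h⟩
      · rintro ⟨s, hs, t, ht, e⟩
        refine ⟨s, hs, 1, one_mem_ssn hF, t, ht, ?_⟩
        rw [zero_mul'', madd_comm, e]
        exact self_mem_madd_zero _
  · by_cases hb : b = 0
    · subst hb
      rw [mul_zero']
      refine ⟨a * a, fun x => ?_⟩
      constructor
      · rintro ⟨s, hs, t, ht, u, _, h⟩
        rw [zero_mul''] at h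
        exact ⟨s, hs, t, ht, (mem_madd_zero _ _).1 h⟩
      · rintro ⟨s, hs, t, ht, e⟩
        refine ⟨s, hs, t, ht, 1, one_mem_ssn hF, ?_⟩
        rw [zero_mul'', e]
        exact self_mem_madd_zero _
    · obtain ⟨c, hc⟩ := madd_nonempty (a * a) (b * b)
      have hcS : c ∈ sumSqNonzero A :=
        ssn_madd_closed (sq_mem_ssn ha) (sq_mem_ssn hb) hc
      refine ⟨c, fun x => ?_⟩
      constructor
      · rintro ⟨s, hs, t, ht, u, hu, h⟩
        have hxs : x * s ∈ sumSqNonzero A :=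
          ssn_madd_closed (ssn_mul_closed hF hsr (sq_mem_ssn ha) ht)
            (ssn_mul_closed hF hsr (sq_mem_ssn hb) hu) h
        exact simM_of_ssn hF hsr (ssn_cancel hF hsr hxs hs) hcS
      · rintro ⟨s, hs, t, ht, e⟩
        refine ⟨s, hs, t, ht, t, ht, ?_⟩
        rw [e]
        exact madd_mul c (a * a) (b * b) t hc

lemma quot_real_reduced (hF : IsHyperfield A) (hsr : IsSemiReal A) :
    QuotIsRealReduced (oneAdd (SumsOfSquares A)) := by
  refine ⟨?_, ?_, ?_, ?_⟩
  · intro l _ hmem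
    rw [qlistSumM_bridge hF hsr] at hmem
    rcases qlistSumM_ssn_sub hF hsr l (-1) hmem with h | h
    · exact hsr (ssn_subset_sos h)
    · exact neg_one_ne_zero_hf hF h
  · intro a
    rw [simM_bridge hF hsr]
    exact simM_cube hF hsr a
  · intro a b x
    rw [simM_bridge hF hsr, qmemM_bridge hF hsr]
    exact qmemM_absorb hF hsr a b x
  · intro a b
    obtain ⟨c, hc⟩ := qmemM_sq_single hF hsr a b
    refine ⟨c, fun x => ?_⟩
    rw [simM_bridge hF hsr, qmemM_bridge hF hsr]
    exact hc x

end Multiring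

/-- For a semi-real hyperfield `F`, the Marshall quotient `F/ₘ(1+ΣF²)` is a
real reduced multiring, and the canonical morphism
`F/ₘ(1+ΣF²) → F/ₘ(ΣḞ²)` is an isomorphism (same classes, same sums). -/
theorem semireal_hyperfield_quotients {F : Type u} [Multiring F]
    (hF : Multiring.IsHyperfield F) (hsr : Multiring.IsSemiReal F) :
    Multiring.QuotIsRealReduced (Multiring.oneAdd (Multiring.SumsOfSquares F)) ∧
    (∀ a b : F,
      Multiring.simM (Multiring.oneAdd (Multiring.SumsOfSquares F)) a b ↔
        Multiring.simM (Multiring.sumSqNonzero F) a b) ∧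
    (∀ a b c : F,
      Multiring.qmemM (Multiring.oneAdd (Multiring.SumsOfSquares F)) a b c ↔
        Multiring.qmemM (Multiring.sumSqNonzero F) a b c) :=
  ⟨Multiring.quot_real_reduced hF hsr,
    Multiring.simM_bridge hF hsr,
    Multiring.qmemM_bridge hF hsr⟩
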